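/- If φ is an existential L-sentence (a quantifier-free formula preceded by a block of existential quantifiers), then Mod_S(φ) is open in the topological space (S_L, τ). -/

import Mathlib

open FirstOrder FirstOrder.Language

universe u v

/-- An `L`-structure is *minimal* if it has no proper substructure; equivalently,
it is generated by the empty set. -/
def FirstOrder.Language.IsMinimal (L : FirstOrder.Language.{u, v}) (M : Type w) [L.Structure M] :
    Prop :=
  Substructure.closure L (∅ : Set M) = ⊤

/-- `qf L M` is the quantifier-free theory of `M`: the set of quantifier-free
`L`-sentences true in `M`. -/
def FirstOrder.Language.qf (L : FirstOrder.Language.{u, v}) (M : Type w) [L.Structure M] :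
    Set L.Sentence :=
  {φ : L.Sentence | BoundedFormula.IsQF φ ∧ M ⊨ φ}

/-- `SL L` is the set of isomorphism types of minimal `L`-structures, identified with
the quantifier-free theories of minimal `L`-structures (equivalently, with the maximal
finitely satisfiable sets of quantifier-free `L`-sentences). -/
def SL (L : FirstOrder.Language.{u, v}) : Type (max u v) :=
  {S : Set L.Sentence // ∃ (M : Type (max u v)) (_ : L.Structure M), L.IsMinimal M ∧ S = L.qf M}

/-- The basic set `U_φ = {S ∈ S_L : φ ∈ S}`. -/
def USet {L : FirstOrder.Language.{u, v}} (φ : L.Sentence) : Set (SL L) :=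
  {S : SL L | φ ∈ S.1}

/-- The Stone topology `τ` on `S_L`, with basis `{U_φ : φ ∈ QF(L)}`. -/
instance stoneTopology (L : FirstOrder.Language.{u, v}) : TopologicalSpace (SL L) :=
  TopologicalSpace.generateFrom
    {V : Set (SL L) | ∃ φ : L.Sentence, BoundedFormula.IsQF φ ∧ V = USet φ}

/-- `ModS L φ` is the set of isomorphism types of minimal models of the `L`-sentence `φ`. -/
def ModS (L : FirstOrder.Language.{u, v}) (φ : L.Sentence) : Set (SL L) :=
  {S : SL L |
    ∃ (M : Type (max u v)) (_ : L.Structure M), L.IsMinimal M ∧ M ⊨ φ ∧ S.1 = L.qf M}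

/-- A bounded formula is existential if it is a quantifier-free formula preceded by a block of
existential quantifiers. -/
inductive IsExistentialBF {L : FirstOrder.Language.{u, v}} {α : Type w} :
    ∀ {n : ℕ}, L.BoundedFormula α n → Prop
  | of_isQF {n : ℕ} {φ : L.BoundedFormula α n} (h : φ.IsQF) : IsExistentialBF φ
  | ex {n : ℕ} {φ : L.BoundedFormula α (n + 1)} (h : IsExistentialBF φ) : IsExistentialBF φ.ex

section Aux

variable {L : FirstOrder.Language.{u, v}}

/-- Substituting closed terms for the bound variables of a bounded formula over `Empty`. -/
def qfSub {n : ℕ} (ψ : L.BoundedFormula Empty n) (t : Fin n → L.Term Empty) : L.Sentence :=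
  ψ.toFormula.subst (Sum.elim (fun e => e.elim) t)

theorem isQF_toFormula {α : Type w} {n : ℕ} {ψ : L.BoundedFormula α n} (h : ψ.IsQF) :
    ψ.toFormula.IsQF := by
  induction h with
  | falsum => exact BoundedFormula.IsQF.falsum
  | of_isAtomic h =>
    cases h with
    | equal t₁ t₂ => exact (BoundedFormula.IsAtomic.equal _ _).isQF
    | rel R ts => exact (BoundedFormula.IsAtomic.rel _ _).isQF
  | imp _ _ ih1 ih2 => exact ih1.imp ih2

theorem isQF_subst {α : Type w} {β : Type x} {n : ℕ} {ψ : L.BoundedFormula α n}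
    (h : ψ.IsQF) (f : α → L.Term β) : (ψ.subst f).IsQF := by
  induction h with
  | falsum => exact BoundedFormula.IsQF.falsum
  | of_isAtomic h =>
    cases h with
    | equal t₁ t₂ => exact (BoundedFormula.IsAtomic.equal _ _).isQF
    | rel R ts => exact (BoundedFormula.IsAtomic.rel _ _).isQF
  | imp _ _ ih1 ih2 => exact ih1.imp ih2

theorem isQF_qfSub {n : ℕ} {ψ : L.BoundedFormula Empty n} (h : ψ.IsQF)
    (t : Fin n → L.Term Empty) : (qfSub ψ t).IsQF :=
  isQF_subst (isQF_toFormula h) _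

theorem sentence_realize_iff (φ : L.Sentence) (M : Type w) [L.Structure M] :
    M ⊨ φ ↔ BoundedFormula.Realize φ (fun e : Empty => (e.elim : M)) (default : Fin 0 → M) := by
  rw [show (fun e : Empty => (e.elim : M)) = (default : Empty → M) from funext fun e => e.elim]
  rfl

theorem realize_qfSub {n : ℕ} (ψ : L.BoundedFormula Empty n) (t : Fin n → L.Term Empty)
    (M : Type w) [L.Structure M] :
    M ⊨ qfSub ψ t ↔
      ψ.Realize (fun e : Empty => (e.elim : M))
        (fun i => (t i).realize (fun e : Empty => (e.elim : M))) := by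
  rw [sentence_realize_iff]
  show (ψ.toFormula.subst (Sum.elim (fun e => e.elim) t)).Realize
      (fun e : Empty => (e.elim : M)) (default : Fin 0 → M) ↔ _
  rw [BoundedFormula.realize_subst]
  show Formula.Realize ψ.toFormula _ ↔ _
  rw [BoundedFormula.realize_toFormula]
  constructor <;> intro h <;> convert h using 2 <;> rfl

/-- The auxiliary version of `ModS` for bounded formulas, with the unbound `Fin n`-variables
quantified existentially on the semantic side. -/
def ModS' (L : FirstOrder.Language.{u, v}) {n : ℕ} (φ : L.BoundedFormula Empty n) :
    Set (SL L) :=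
  {S : SL L |
    ∃ (M : Type (max u v)) (_ : L.Structure M), L.IsMinimal M ∧
      (∃ xs : Fin n → M, φ.Realize (fun e => e.elim) xs) ∧ S.1 = L.qf M}

theorem ModS'_ex {n : ℕ} (φ : L.BoundedFormula Empty (n + 1)) :
    ModS' L φ.ex = ModS' L φ := by
  ext S
  refine ⟨?_, ?_⟩ <;> rintro ⟨M, inst, hmin, ⟨xs, hxs⟩, hS⟩
  · rw [BoundedFormula.realize_ex] at hxs
    obtain ⟨a, ha⟩ := hxs
    exact ⟨M, inst, hmin, ⟨Fin.snoc xs a, ha⟩, hS⟩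
  · refine ⟨M, inst, hmin, ⟨Fin.init xs, ?_⟩, hS⟩
    rw [BoundedFormula.realize_ex]
    exact ⟨xs (Fin.last n), by rwa [Fin.snoc_init_self]⟩

theorem exists_closed_term {M : Type w} [L.Structure M] (hmin : L.IsMinimal M) (x : M) :
    ∃ t : L.Term Empty, t.realize (fun e => e.elim) = x := by
  have hx : x ∈ Substructure.closure L (∅ : Set M) := by
    rw [hmin]; trivial
  rw [Substructure.mem_closure_iff_exists_term] at hx
  obtain ⟨t, ht⟩ := hx
  refine ⟨t.relabel (fun s => absurd s.2 (Set.notMem_empty s.1)), ?_⟩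
  rw [Term.realize_relabel, ← ht]
  congr 1
  funext s
  exact absurd s.2 (Set.notMem_empty s.1)

theorem ModS'_eq_iUnion {n : ℕ} {ψ : L.BoundedFormula Empty n} (hψ : ψ.IsQF) :
    ModS' L ψ = ⋃ t : Fin n → L.Term Empty, USet (qfSub ψ t) := by
  ext S
  constructor
  · rintro ⟨M, inst, hmin, ⟨xs, hxs⟩, hS⟩
    choose t ht using fun i => exists_closed_term hmin (xs i)
    refine Set.mem_iUnion.2 ⟨t, ?_⟩
    show qfSub ψ t ∈ S.1
    rw [hS]
    refine ⟨isQF_qfSub hψ t, ?_⟩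
    rw [realize_qfSub]
    convert hxs using 1
    funext i
    exact ht i
  · intro hmem
    obtain ⟨t, hmem⟩ := Set.mem_iUnion.1 hmem
    obtain ⟨M, inst, hmin, hS⟩ := S.2
    have hqf : qfSub ψ t ∈ L.qf M := by rw [← hS]; exact hmem
    obtain ⟨-, hreal⟩ := hqf
    rw [realize_qfSub] at hreal
    exact ⟨M, inst, hmin, ⟨_, hreal⟩, hS⟩

theorem isOpen_ModS' {n : ℕ} {φ : L.BoundedFormula Empty n} (hφ : IsExistentialBF φ) :
    IsOpen (ModS' L φ) := by
  induction hφ with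
  | of_isQF h =>
    rw [ModS'_eq_iUnion h]
    exact isOpen_iUnion fun t =>
      TopologicalSpace.isOpen_generateFrom_of_mem ⟨qfSub _ t, isQF_qfSub h t, rfl⟩
  | ex h ih => rwa [ModS'_ex]

theorem ModS_eq_ModS' (φ : L.Sentence) : ModS L φ = ModS' L φ := by
  ext S
  unfold ModS ModS'
  refine ⟨?_, ?_⟩ <;> rintro ⟨M, inst, hmin, hreal, hS⟩
  · rw [sentence_realize_iff] at hreal
    exact ⟨M, inst, hmin, ⟨default, hreal⟩, hS⟩
  · obtain ⟨xs, hxs⟩ := hreal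
    refine ⟨M, inst, hmin, ?_, hS⟩
    rw [sentence_realize_iff]
    rwa [Subsingleton.elim (default : Fin 0 → M) xs]

end Aux

/-- **Proposition 2.3.** If `φ` is an existential `L`-sentence then `Mod_S(φ)` is open in the
Stone space `(S_L, τ)`. -/
theorem isOpen_ModS_of_existential (L : FirstOrder.Language.{u, v}) [Nonempty L.Constants]
    (φ : L.Sentence) (hφ : IsExistentialBF φ) :
    IsOpen (ModS L φ) := by
  rw [ModS_eq_ModS']
  exact isOpen_ModS' hφ
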